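/- Let h ∈ (0,1) and λ ∈ (0,1). Then F_λ(r) ≤ F(r) for every r ∈ [0,1), with equality F_λ(r) = F(r) for every r ∈ [0, 1−λ). -/

import Mathlib

/-- The Lennard--Jones potential `F(r) = -h log(1-r) - r³/3 - h (r²/2 + r)`. -/
noncomputable def FLJ (h r : ℝ) : ℝ := -h * Real.log (1 - r) - r^3/3 - h * (r^2/2 + r)

/-- Convex singular part `F_{1,λ}` of the regularized Lennard--Jones potential. -/
noncomputable def F1reg (h l r : ℝ) : ℝ :=
  if r < 0 then -r^3/l + h/2 * r^2 + h*r
  else if r < 1 - l then -h * Real.log (1 - r)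
  else -h * Real.log l + 3*h/2 - 2*h/l * (1 - r) + h/(2*l^2) * (1 - r)^2

/-- Non-convex regular part `F̄₂` of the regularized Lennard--Jones potential. -/
noncomputable def F2reg (h r : ℝ) : ℝ :=
  if r < 1 then -r^3/3 - h*(r^2/2 + r)
  else -1/3 - 3*h/2 - (1 + 2*h)*(r - 1) - (2 + h)/2 * (r - 1)^2

/-- The regularized potential `F_λ = F_{1,λ} + F̄₂`. -/
noncomputable def Freg (h l r : ℝ) : ℝ := F1reg h l r + F2reg h r

lemma log_le_quad {s : ℝ} (hs : 0 < s) (hs1 : s ≤ 1) :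
    Real.log s ≤ (s - 1) - (s - 1)^2 / 2 := by
  set f : ℝ → ℝ := fun t => (t - 1) - (t - 1)^2 / 2 - Real.log t with hf
  have hder : ∀ x ∈ Set.Ioi (0:ℝ), HasDerivAt f (1 - (x - 1) - x⁻¹) x := by
    intro x hx
    have hx0 : x ≠ 0 := ne_of_gt hx
    have h1 : HasDerivAt (fun t:ℝ => t - 1) 1 x := (hasDerivAt_id x).sub_const 1
    have h2 : HasDerivAt (fun t:ℝ => (t-1)^2/2) ((2 * (x-1)^1 * 1)/2) x :=
      (h1.pow 2).div_const 2
    have h3 := Real.hasDerivAt_log hx0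
    have h4 := (h1.sub h2).sub h3
    exact h4.congr_deriv (by ring)
  have hanti : AntitoneOn f (Set.Ioi 0) := by
    apply antitoneOn_of_deriv_nonpos (convex_Ioi 0)
    · intro x hx
      exact (hder x hx).continuousAt.continuousWithinAt
    · intro x hx
      rw [interior_Ioi] at hx
      exact (hder x hx).differentiableAt.differentiableWithinAt
    · intro x hx
      rw [interior_Ioi] at hx
      rw [(hder x hx).deriv]
      have hx0 : (0:ℝ) < x := hx
      have he : 1 - (x - 1) - x⁻¹ = -(x-1)^2 / x := by
        field_simp
        ring
      rw [he]
      exact div_nonpos_of_nonpos_of_nonneg (by nlinarith) hx0.le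
  have h01 := hanti (Set.mem_Ioi.mpr hs) (Set.mem_Ioi.mpr one_pos) hs1
  simp only [hf, Real.log_one] at h01
  norm_num at h01
  linarith

/-- `F_λ ≤ F` on `[0,1)`, with equality on `[0, 1-λ)`. -/
theorem Freg_le_FLJ (h l : ℝ) (hh : h ∈ Set.Ioo (0:ℝ) 1) (hl : l ∈ Set.Ioo (0:ℝ) 1) :
    (∀ r ∈ Set.Ico (0:ℝ) 1, Freg h l r ≤ FLJ h r) ∧
    (∀ r ∈ Set.Ico (0:ℝ) (1 - l), Freg h l r = FLJ h r) := by
  obtain ⟨hh0, hh1⟩ := hh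
  obtain ⟨hl0, hl1⟩ := hl
  have heq : ∀ r ∈ Set.Ico (0:ℝ) (1 - l), Freg h l r = FLJ h r := by
    rintro r ⟨hr0, hr1⟩
    have hr1' : r < 1 := by linarith
    unfold Freg F1reg F2reg FLJ
    rw [if_neg (not_lt.mpr hr0), if_pos hr1, if_pos hr1']
    ring
  refine ⟨?_, heq⟩
  rintro r ⟨hr0, hr1⟩
  by_cases hc : r < 1 - l
  · exact le_of_eq (heq r ⟨hr0, hc⟩)
  · push_neg at hc
    have ht0 : 0 < 1 - r := by linarith
    have htl : 1 - r ≤ l := by linarith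
    set s := (1 - r)/l with hs
    have hs0 : 0 < s := div_pos ht0 hl0
    have hs1 : s ≤ 1 := (div_le_one hl0).mpr htl
    have hkey := log_le_quad hs0 hs1
    have hmul : h * Real.log s ≤ h * ((s - 1) - (s - 1)^2/2) :=
      mul_le_mul_of_nonneg_left hkey hh0.le
    have hlog : Real.log (1 - r) = Real.log l + Real.log s := by
      rw [hs, Real.log_div (ne_of_gt ht0) (ne_of_gt hl0)]
      ring
    have h1r : 1 - r = s * l := by rw [hs]; field_simp
    unfold Freg F1reg F2reg FLJ
    rw [if_neg (not_lt.mpr hr0), if_neg (not_lt.mpr hc), if_pos hr1, hlog, h1r]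
    have e1 : 2*h/l * (s*l) = 2*h*s := by field_simp
    have e2 : h/(2*l^2) * (s*l)^2 = h*s^2/2 := by field_simp
    rw [e1, e2]
    nlinarith [hmul]
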